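/- The functions (sin θ)^{1/2} D_l^{k,n}(θ, φ, χ) are orthonormal with respect to the measure dθ dφ dχ on [0,π]×[0,2π]×[0,2π]; equivalently, for all integers l, l' ≥ 0, −l ≤ k, n ≤ l, and −l' ≤ k', n' ≤ l', ∫_0^{2π} ∫_0^{2π} ∫_0^{π} D_l^{k,n}(θ,φ,χ) · conj(D_{l'}^{k',n'}(θ,φ,χ)) · sin θ dθ dφ dχ = δ_{l l'} δ_{k k'} δ_{n n'}. -/

import Mathlib

open scoped Real BigOperators

/-- Associated Legendre polynomial `P_l^k(x)` for integer order `k` (possibly negative). -/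
noncomputable def assocLegendre (l : ℕ) (k : ℤ) (x : ℝ) : ℝ :=
  ((-1 : ℝ) ^ k / (2 ^ l * (Nat.factorial l : ℝ))) * (1 - x ^ 2) ^ ((k : ℝ) / 2) *
    iteratedDeriv (k + (l : ℤ)).toNat (fun y : ℝ => (y ^ 2 - 1) ^ l) x

/-- Normalization factor of spherical harmonics. -/
noncomputable def shNormFactor (l : ℕ) (k : ℤ) : ℝ :=
  Real.sqrt ((2 * (l : ℝ) + 1) / (4 * Real.pi) *
    ((Nat.factorial ((l : ℤ) - k).toNat : ℝ) / (Nat.factorial ((l : ℤ) + k).toNat : ℝ)))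

/-- Spherical harmonic `Y_l^k(θ,φ)`. -/
noncomputable def sphericalHarmonic (l : ℕ) (k : ℤ) (θ φ : ℝ) : ℂ :=
  ((shNormFactor l k * assocLegendre l k (Real.cos θ) : ℝ) : ℂ) *
    Complex.exp (Complex.I * (k : ℂ) * (φ : ℂ))

/-- Jacobi polynomial `P_α^{(ξ,λ)}(x)`. -/
noncomputable def jacobiP (a ξ lam : ℕ) (x : ℝ) : ℝ :=
  ((-1 : ℝ) ^ a / (2 ^ a * (Nat.factorial a : ℝ))) * (1 - x) ^ (-(ξ : ℤ)) *
    (1 + x) ^ (-(lam : ℤ)) *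
    iteratedDeriv a (fun y : ℝ => (1 - y) ^ ξ * (1 + y) ^ lam * (1 - y ^ 2) ^ a) x

/-- The coefficient `γ = α!(α+ξ+λ)!/((α+ξ)!(α+λ)!)`. -/
noncomputable def jacobiGamma (a ξ lam : ℕ) : ℝ :=
  ((Nat.factorial a : ℝ) * (Nat.factorial (a + ξ + lam) : ℝ)) /
    ((Nat.factorial (a + ξ) : ℝ) * (Nat.factorial (a + lam) : ℝ))

/-- Wigner d-function `d_l^{k,n}(cos θ)` (as a function of `θ`). -/
noncomputable def wignerd (l : ℕ) (k n : ℤ) (θ : ℝ) : ℝ :=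
  let ξ : ℕ := (k - n).natAbs
  let lam : ℕ := (k + n).natAbs
  let a : ℕ := l - (ξ + lam) / 2
  let ω : ℝ := if k ≤ n then 1 else (-1 : ℝ) ^ (n - k)
  ω * Real.sqrt (jacobiGamma a ξ lam) * (Real.sin (θ / 2)) ^ ξ * (Real.cos (θ / 2)) ^ lam *
    jacobiP a ξ lam (Real.cos θ)

/-- Wigner D-function `D_l^{k,n}(θ,φ,χ)`. -/
noncomputable def wignerD (l : ℕ) (k n : ℤ) (θ φ χ : ℝ) : ℂ :=
  ((Real.sqrt ((2 * (l : ℝ) + 1) / (8 * Real.pi ^ 2)) : ℝ) : ℂ) *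
    Complex.exp (-(Complex.I * (k : ℂ) * (φ : ℂ))) * ((wignerd l k n θ : ℝ) : ℂ) *
    Complex.exp (-(Complex.I * (n : ℂ) * (χ : ℂ)))

/-- Column index set for the spherical-harmonic sensing matrix: pairs `(l,k)`,
`0 ≤ l ≤ B-1`, `-l ≤ k ≤ l`.  It has `B^2` elements. -/
abbrev SHIndex (B : ℕ) := Σ l : Fin B, ↥(Set.Icc (-(l.1 : ℤ)) (l.1 : ℤ))

/-- Column index set for the Wigner-D sensing matrix: triples `(l,k,n)`,
`0 ≤ l ≤ B-1`, `-l ≤ k,n ≤ l`.  It has `B(2B-1)(2B+1)/3` elements. -/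
abbrev WDIndex (B : ℕ) :=
  Σ l : Fin B, ↥(Set.Icc (-(l.1 : ℤ)) (l.1 : ℤ)) × ↥(Set.Icc (-(l.1 : ℤ)) (l.1 : ℤ))

/-- The spherical-harmonic sensing matrix. -/
noncomputable def shMatrix {m : ℕ} (B : ℕ) (θ φ : Fin m → ℝ) :
    Matrix (Fin m) (SHIndex B) ℂ :=
  fun p i => sphericalHarmonic i.1.1 i.2.1 (θ p) (φ p)

/-- The Wigner-D sensing matrix. -/
noncomputable def wdMatrix {m : ℕ} (B : ℕ) (θ φ χ : Fin m → ℝ) :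
    Matrix (Fin m) (WDIndex B) ℂ :=
  fun p i => wignerD i.1.1 i.2.1.1 i.2.2.1 (θ p) (φ p) (χ p)

/-- Mutual coherence of a matrix: the supremum over pairs of distinct columns of the
normalized absolute inner product. -/
noncomputable def mutualCoherence {m : ℕ} {ι : Type*} (A : Matrix (Fin m) ι ℂ) : ℝ :=
  sSup {x : ℝ | ∃ i j : ι, i ≠ j ∧
    x = ‖∑ p, (starRingEnd ℂ) (A p i) * A p j‖ /
        (Real.sqrt (∑ p, Complex.normSq (A p i)) * Real.sqrt (∑ p, Complex.normSq (A p j)))}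


section WignerAux
open Polynomial intervalIntegral

lemma iteratedDeriv_polyeval (p : Polynomial ℝ) (n : ℕ) :
    iteratedDeriv n (fun x => p.eval x) = fun x => (derivative^[n] p).eval x := by
  induction n with
  | zero => simp
  | succ n ih =>
    rw [iteratedDeriv_succ, ih, Function.iterate_succ_apply']
    funext x
    exact Polynomial.deriv _

/-- Rodrigues kernel. -/

noncomputable def jacR (ξ lam a : ℕ) : Polynomial ℝ := (1 - X) ^ (ξ + a) * (1 + X) ^ (lam + a)

lemma jacR_exists_S (ξ lam a : ℕ) : ∀ j, j ≤ a → ∃ S : Polynomial ℝ,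
    derivative^[j] (jacR ξ lam a) = (1 - X) ^ (ξ + a - j) * (1 + X) ^ (lam + a - j) * S := by
  intro j
  induction j with
  | zero => exact fun _ => ⟨1, by simp [jacR]⟩
  | succ j ih =>
    intro hj
    obtain ⟨S, hS⟩ := ih (Nat.le_of_succ_le hj)
    obtain ⟨m, hm⟩ : ∃ m, ξ + a - j = m + 1 := ⟨ξ + a - j - 1, by omega⟩
    obtain ⟨p, hp⟩ : ∃ p, lam + a - j = p + 1 := ⟨lam + a - j - 1, by omega⟩
    refine ⟨-(C ((m:ℝ)+1)) * (1 + X) * S + (C ((p:ℝ)+1)) * (1 - X) * S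
      + (1 - X) * (1 + X) * derivative S, ?_⟩
    rw [Function.iterate_succ_apply', hS, hm, hp]
    have h1 : (ξ + a - (j + 1)) = m := by omega
    have h2 : (lam + a - (j + 1)) = p := by omega
    rw [h1, h2]
    rw [derivative_mul, derivative_mul, derivative_pow, derivative_pow]
    simp only [derivative_sub, derivative_add, derivative_one, derivative_X, zero_sub, zero_add,
      mul_neg, mul_one, pow_succ]
    push_cast
    ring

noncomputable def jacS (ξ lam a : ℕ) : Polynomial ℝ :=
  (jacR_exists_S ξ lam a a le_rfl).choose

lemma jacS_spec (ξ lam a : ℕ) :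
    derivative^[a] (jacR ξ lam a) = (1 - X) ^ ξ * (1 + X) ^ lam * jacS ξ lam a := by
  have := (jacR_exists_S ξ lam a a le_rfl).choose_spec
  unfold jacS
  simpa [Nat.add_sub_cancel] using this

lemma one_sub_X_natDegree : ((1 : Polynomial ℝ) - X).natDegree = 1 := by
  have : ((1 : Polynomial ℝ) - X) = -(X - C 1) := by rw [map_one]; ring
  rw [this, natDegree_neg, natDegree_X_sub_C]

lemma one_add_X_natDegree : ((1 : Polynomial ℝ) + X).natDegree = 1 := by
  have : ((1 : Polynomial ℝ) + X) = X + C 1 := by rw [map_one]; ring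
  rw [this]
  simpa using natDegree_X_add_C (1 : ℝ)

lemma one_sub_X_ne_zero : ((1 : Polynomial ℝ) - X) ≠ 0 := by
  intro h; simpa [h] using one_sub_X_natDegree

lemma one_add_X_ne_zero : ((1 : Polynomial ℝ) + X) ≠ 0 := by
  intro h; simpa [h] using one_add_X_natDegree

lemma one_sub_X_leadingCoeff : ((1 : Polynomial ℝ) - X).leadingCoeff = -1 := by
  rw [leadingCoeff, one_sub_X_natDegree]
  simp [coeff_one]

lemma one_add_X_leadingCoeff : ((1 : Polynomial ℝ) + X).leadingCoeff = 1 := by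
  rw [leadingCoeff, one_add_X_natDegree]
  simp [coeff_one]

lemma jacR_natDegree (ξ lam a : ℕ) : (jacR ξ lam a).natDegree = ξ + lam + 2 * a := by
  rw [jacR, natDegree_mul (pow_ne_zero _ one_sub_X_ne_zero) (pow_ne_zero _ one_add_X_ne_zero),
    natDegree_pow, natDegree_pow, one_sub_X_natDegree, one_add_X_natDegree]
  ring

lemma jacR_leadingCoeff (ξ lam a : ℕ) :
    (jacR ξ lam a).leadingCoeff = (-1 : ℝ) ^ (ξ + a) := by
  rw [jacR, leadingCoeff_mul, leadingCoeff_pow, leadingCoeff_pow, one_sub_X_leadingCoeff,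
    one_add_X_leadingCoeff, one_pow, mul_one]

lemma jacR_deriv_coeff (ξ lam a : ℕ) :
    (derivative^[a] (jacR ξ lam a)).coeff (ξ + lam + a)
      = ((ξ + lam + 2 * a).descFactorial a : ℝ) * (-1 : ℝ) ^ (ξ + a) := by
  rw [coeff_iterate_derivative]
  have h : ξ + lam + a + a = ξ + lam + 2 * a := by ring
  rw [h, nsmul_eq_mul]
  congr 1
  have := jacR_leadingCoeff ξ lam a
  rwa [leadingCoeff, jacR_natDegree] at this

lemma descFactorial_ne_zero' (ξ lam a : ℕ) : ((ξ + lam + 2 * a).descFactorial a : ℝ) ≠ 0 := by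
  have : (ξ + lam + 2 * a).descFactorial a ≠ 0 := by
    rw [Ne, Nat.descFactorial_eq_zero_iff_lt]
    omega
  exact_mod_cast this

lemma jacR_deriv_coeff_ne_zero (ξ lam a : ℕ) :
    (derivative^[a] (jacR ξ lam a)).coeff (ξ + lam + a) ≠ 0 := by
  rw [jacR_deriv_coeff]
  exact mul_ne_zero (descFactorial_ne_zero' ξ lam a) (by positivity)

lemma jacR_deriv_natDegree (ξ lam a : ℕ) :
    (derivative^[a] (jacR ξ lam a)).natDegree = ξ + lam + a := by
  apply le_antisymm
  · have := natDegree_iterate_derivative (jacR ξ lam a) a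
    rw [jacR_natDegree] at this
    omega
  · exact le_natDegree_of_ne_zero (jacR_deriv_coeff_ne_zero ξ lam a)

lemma jacS_ne_zero (ξ lam a : ℕ) : jacS ξ lam a ≠ 0 := by
  intro h
  have h3 := jacR_deriv_coeff_ne_zero ξ lam a
  rw [jacS_spec, h, mul_zero] at h3
  simp at h3

lemma jacS_natDegree (ξ lam a : ℕ) : (jacS ξ lam a).natDegree = a := by
  have h := jacR_deriv_natDegree ξ lam a
  rw [jacS_spec, natDegree_mul (mul_ne_zero (pow_ne_zero _ one_sub_X_ne_zero)
      (pow_ne_zero _ one_add_X_ne_zero)) (jacS_ne_zero ξ lam a),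
    natDegree_mul (pow_ne_zero _ one_sub_X_ne_zero) (pow_ne_zero _ one_add_X_ne_zero),
    natDegree_pow, natDegree_pow, one_sub_X_natDegree, one_add_X_natDegree] at h
  omega

lemma jacS_leadingCoeff (ξ lam a : ℕ) :
    (jacS ξ lam a).leadingCoeff = (-1 : ℝ) ^ a * ((ξ + lam + 2 * a).descFactorial a : ℝ) := by
  have h := jacR_deriv_coeff ξ lam a
  rw [show ξ + lam + a = (derivative^[a] (jacR ξ lam a)).natDegree from
    (jacR_deriv_natDegree ξ lam a).symm, ← leadingCoeff, jacS_spec, leadingCoeff_mul,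
    leadingCoeff_mul, leadingCoeff_pow, leadingCoeff_pow, one_sub_X_leadingCoeff,
    one_add_X_leadingCoeff, one_pow, mul_one] at h
  have hsq : ((-1:ℝ) ^ ξ) * ((-1:ℝ) ^ ξ) = 1 := by
    rw [← pow_add, ← two_mul, pow_mul, neg_one_sq, one_pow]
  calc (jacS ξ lam a).leadingCoeff
      = ((-1:ℝ)^ξ * (-1:ℝ)^ξ) * (jacS ξ lam a).leadingCoeff := by rw [hsq, one_mul]
    _ = (-1:ℝ)^ξ * (((ξ + lam + 2 * a).descFactorial a : ℝ) * (-1 : ℝ) ^ (ξ + a)) := by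
        rw [mul_assoc, h]
    _ = ((-1:ℝ)^ξ * (-1:ℝ)^ξ) * ((-1 : ℝ) ^ a * ((ξ + lam + 2 * a).descFactorial a : ℝ)) := by
        rw [pow_add]; ring
    _ = (-1 : ℝ) ^ a * ((ξ + lam + 2 * a).descFactorial a : ℝ) := by rw [hsq, one_mul]

lemma jacR_deriv_boundary (ξ lam a j : ℕ) (hj : j < a) (x : ℝ) (hx : x = 1 ∨ x = -1) :
    (derivative^[j] (jacR ξ lam a)).eval x = 0 := by
  obtain ⟨S, hS⟩ := jacR_exists_S ξ lam a j (le_of_lt hj)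
  rw [hS]
  rcases hx with rfl | rfl <;>
    simp [eval_pow, (show (0:ℝ) ^ (ξ + a - j) = 0 from zero_pow (by omega)),
      (show (0:ℝ) ^ (lam + a - j) = 0 from zero_pow (by omega))]

lemma poly_intervalIntegrable (p : Polynomial ℝ) (a b : ℝ) :
    IntervalIntegrable (fun x => p.eval x) MeasureTheory.volume a b :=
  (p.continuous).intervalIntegrable a b

lemma jac_parts (ξ lam a : ℕ) (q : Polynomial ℝ) : ∀ j, j ≤ a →
    (∫ x in (-1:ℝ)..1, (derivative^[a] (jacR ξ lam a)).eval x * q.eval x) =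
    (-1:ℝ)^j * ∫ x in (-1:ℝ)..1,
      (derivative^[a-j] (jacR ξ lam a)).eval x * (derivative^[j] q).eval x := by
  intro j
  induction j with
  | zero => simp
  | succ j ih =>
    intro hj
    rw [ih (by omega)]
    set m := a - (j + 1) with hm
    have hma : a - j = m + 1 := by omega
    have key : (∫ x in (-1:ℝ)..1,
        (derivative^[m+1] (jacR ξ lam a)).eval x * (derivative^[j] q).eval x) =
        - ∫ x in (-1:ℝ)..1,
          (derivative^[m] (jacR ξ lam a)).eval x * (derivative^[j+1] q).eval x := by
      have hparts := intervalIntegral.integral_deriv_mul_eq_sub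
        (u := fun x => (derivative^[m] (jacR ξ lam a)).eval x)
        (v := fun x => (derivative^[j] q).eval x)
        (u' := fun x => (derivative^[m+1] (jacR ξ lam a)).eval x)
        (v' := fun x => (derivative^[j+1] q).eval x)
        (a := (-1:ℝ)) (b := 1)
        (fun x _ => by
          rw [Function.iterate_succ_apply']
          exact (derivative^[m] (jacR ξ lam a)).hasDerivAt x)
        (fun x _ => by
          rw [Function.iterate_succ_apply']
          exact (derivative^[j] q).hasDerivAt x)
        (poly_intervalIntegrable _ _ _) (poly_intervalIntegrable _ _ _)
      simp only [jacR_deriv_boundary ξ lam a m (by omega) 1 (Or.inl rfl),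
        jacR_deriv_boundary ξ lam a m (by omega) (-1) (Or.inr rfl), zero_mul, sub_zero]
        at hparts
      rw [intervalIntegral.integral_add
        ((by exact (Polynomial.continuous _).mul (Polynomial.continuous _) : Continuous fun x : ℝ =>
          (derivative^[m+1] (jacR ξ lam a)).eval x * (derivative^[j] q).eval x).intervalIntegrable _ _)
        ((by exact (Polynomial.continuous _).mul (Polynomial.continuous _) : Continuous fun x : ℝ =>
          (derivative^[m] (jacR ξ lam a)).eval x * (derivative^[j+1] q).eval x).intervalIntegrable _ _)]
        at hparts
      linarith
    rw [hma, key, pow_succ]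
    ring

lemma betaInt : ∀ (m p : ℕ), (∫ x in (-1:ℝ)..1, (1-x)^m * (1+x)^p) =
    2^(m+p+1) * (m.factorial * p.factorial : ℝ) / ((m+p+1).factorial : ℝ) := by
  intro m
  induction m with
  | zero =>
    intro p
    have h : (∫ x in (-1:ℝ)..1, (1-x)^0 * (1+x)^p) = ∫ x in (-1:ℝ)..1, (x + 1)^p := by
      congr 1; funext x; ring_nf
    rw [h, intervalIntegral.integral_comp_add_right (fun y => y ^ p) 1]
    norm_num [integral_pow]
    rw [Nat.factorial_succ]
    push_cast
    rw [eq_div_iff (by positivity)]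
    field_simp
  | succ m ih =>
    intro p
    have hparts := intervalIntegral.integral_deriv_mul_eq_sub
      (u := fun x => (1-x)^(m+1)) (v := fun x => (1+x)^(p+1))
      (u' := fun x => -(((m:ℝ)+1) * (1-x)^m)) (v' := fun x => ((p:ℝ)+1) * (1+x)^p)
      (a := (-1:ℝ)) (b := 1)
      (fun x _ => by
        have h1 : HasDerivAt (fun x : ℝ => 1 - x) (-1) x := by
          simpa using (hasDerivAt_id x).const_sub 1
        have := h1.pow (m+1)
        convert this using 1
        · rfl
        · rw [Nat.add_sub_cancel]; push_cast; ring)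
      (fun x _ => by
        have h1 : HasDerivAt (fun x : ℝ => 1 + x) 1 x := by
          simpa using (hasDerivAt_id x).const_add 1
        have := h1.pow (p+1)
        convert this using 1
        · rfl
        · rw [Nat.add_sub_cancel]; push_cast; ring)
      ((by continuity : Continuous fun x : ℝ => -(((m:ℝ)+1) * (1-x)^m)).intervalIntegrable _ _)
      ((by continuity : Continuous fun x : ℝ => ((p:ℝ)+1) * (1+x)^p).intervalIntegrable _ _)
    simp only [sub_self, zero_pow (Nat.succ_ne_zero m), zero_mul, neg_add_cancel,
      zero_pow (Nat.succ_ne_zero p), mul_zero, sub_zero] at hparts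
    norm_num at hparts
    have hsplit : (∫ x in (-1:ℝ)..1,
        -(((m:ℝ)+1) * (1-x)^m * (1+x)^(p+1)) + (1-x)^(m+1) * (((p:ℝ)+1) * (1+x)^p)) =
        (-((m:ℝ)+1)) * (∫ x in (-1:ℝ)..1, (1-x)^m * (1+x)^(p+1)) +
        ((p:ℝ)+1) * (∫ x in (-1:ℝ)..1, (1-x)^(m+1) * (1+x)^p) := by
      rw [intervalIntegral.integral_add
        ((by continuity : Continuous fun x : ℝ => -(((m:ℝ)+1) * (1-x)^m * (1+x)^(p+1))).intervalIntegrable _ _)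
        ((by continuity : Continuous fun x : ℝ => (1-x)^(m+1) * (((p:ℝ)+1) * (1+x)^p)).intervalIntegrable _ _)]
      rw [show (fun x : ℝ => -(((m:ℝ)+1) * (1-x)^m * (1+x)^(p+1))) =
        fun x : ℝ => (-((m:ℝ)+1)) * ((1-x)^m * (1+x)^(p+1)) from by funext x; ring,
        show (fun x : ℝ => (1-x)^(m+1) * (((p:ℝ)+1) * (1+x)^p)) =
        fun x : ℝ => ((p:ℝ)+1) * ((1-x)^(m+1) * (1+x)^p) from by funext x; ring]
      rw [intervalIntegral.integral_const_mul, intervalIntegral.integral_const_mul]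
    rw [hsplit] at hparts
    have heq : ((p:ℝ)+1) * (∫ x in (-1:ℝ)..1, (1-x)^(m+1) * (1+x)^p) =
        ((m:ℝ)+1) * (∫ x in (-1:ℝ)..1, (1-x)^m * (1+x)^(p+1)) := by linarith
    have hih := ih (p+1)
    have hne : ((p:ℝ)+1) ≠ 0 := by positivity
    have : (∫ x in (-1:ℝ)..1, (1-x)^(m+1) * (1+x)^p) =
        ((m:ℝ)+1) / ((p:ℝ)+1) * (∫ x in (-1:ℝ)..1, (1-x)^m * (1+x)^(p+1)) := by
      field_simp
      linarith
    rw [this, hih]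
    have h1 : ((m+1).factorial : ℝ) = ((m:ℝ)+1) * (m.factorial : ℝ) := by
      rw [Nat.factorial_succ]; push_cast; ring
    have h2 : ((p+1).factorial : ℝ) = ((p:ℝ)+1) * (p.factorial : ℝ) := by
      rw [Nat.factorial_succ]; push_cast; ring
    rw [h1, h2]
    have hne2 : ((m+1+p+1).factorial : ℝ) ≠ 0 := by positivity
    field_simp
    ring

noncomputable def jacPoly (ξ lam a : ℕ) : Polynomial ℝ :=
  C ((-1:ℝ)^a / (2^a * a.factorial)) * jacS ξ lam a

/-- key rewriting: the weighted Jacobi polynomial is the Rodrigues derivative. -/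

lemma jacPoly_weight (ξ lam a : ℕ) :
    (1 - X:Polynomial ℝ)^ξ * (1+X)^lam * jacPoly ξ lam a
      = C ((-1:ℝ)^a / (2^a * a.factorial)) * derivative^[a] (jacR ξ lam a) := by
  rw [jacPoly, jacS_spec]; ring

/-- vanishing against low-degree polynomials. -/

lemma jac_int_lowdeg (ξ lam a : ℕ) (q : Polynomial ℝ) (hq : derivative^[a] q = 0) :
    (∫ x in (-1:ℝ)..1, (derivative^[a] (jacR ξ lam a)).eval x * q.eval x) = 0 := by
  rw [jac_parts ξ lam a q a le_rfl, hq]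
  simp

lemma jac_int_X_pow (ξ lam a : ℕ) :
    (∫ x in (-1:ℝ)..1, (derivative^[a] (jacR ξ lam a)).eval x * x ^ a) =
      (-1:ℝ)^a * (a.factorial : ℝ) *
        (2^(ξ+lam+2*a+1) * (((ξ+a).factorial : ℝ) * ((lam+a).factorial : ℝ))
          / ((ξ+lam+2*a+1).factorial : ℝ)) := by
  have h := jac_parts ξ lam a (X^a) a le_rfl
  simp only [Nat.sub_self, Function.iterate_zero_apply, eval_pow, eval_X] at h
  rw [h, iterate_derivative_X_pow_eq_C_mul, Nat.sub_self, pow_zero, mul_one,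
    Nat.descFactorial_self]
  have : (∫ x in (-1:ℝ)..1, (jacR ξ lam a).eval x * (C ((a.factorial : ℝ))).eval x)
      = (a.factorial : ℝ) * ∫ x in (-1:ℝ)..1, (1-x)^(ξ+a) * (1+x)^(lam+a) := by
    rw [← intervalIntegral.integral_const_mul]
    congr 1
    funext x
    simp [jacR, eval_pow]
    ring
  rw [this, betaInt]
  have he : ξ + a + (lam + a) + 1 = ξ + lam + 2*a + 1 := by ring
  rw [he]
  ring

lemma jacPoly_ne_zero (ξ lam a : ℕ) : jacPoly ξ lam a ≠ 0 := by
  refine mul_ne_zero ?_ (jacS_ne_zero ξ lam a)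
  rw [Ne, C_eq_zero]
  have h1 : (a.factorial : ℝ) ≠ 0 := by positivity
  positivity

lemma jacPoly_natDegree (ξ lam a : ℕ) : (jacPoly ξ lam a).natDegree = a := by
  rw [jacPoly, natDegree_mul (fun h => jacPoly_ne_zero ξ lam a (by rw [jacPoly, h, zero_mul]))
    (jacS_ne_zero ξ lam a), natDegree_C, jacS_natDegree, zero_add]

lemma jacPoly_coeff_top (ξ lam a : ℕ) :
    (jacPoly ξ lam a).coeff a = ((-1:ℝ)^a / (2^a * a.factorial)) *
      ((-1 : ℝ) ^ a * ((ξ + lam + 2 * a).descFactorial a : ℝ)) := by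
  rw [jacPoly, coeff_C_mul]
  congr 1
  have := jacS_leadingCoeff ξ lam a
  rwa [leadingCoeff, jacS_natDegree] at this

/-- integral against any jacPoly of lower degree index vanishes -/

lemma jac_int_jacPoly_lt (ξ lam a a' : ℕ) (h : a' < a) :
    (∫ x in (-1:ℝ)..1, (derivative^[a] (jacR ξ lam a)).eval x * (jacPoly ξ lam a').eval x) = 0 :=
  jac_int_lowdeg ξ lam a _ (iterate_derivative_eq_zero (by rw [jacPoly_natDegree]; omega))

lemma jac_int_jacPoly_self (ξ lam a : ℕ) :
    (∫ x in (-1:ℝ)..1, (derivative^[a] (jacR ξ lam a)).eval x * (jacPoly ξ lam a).eval x)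
      = (jacPoly ξ lam a).coeff a * ((-1:ℝ)^a * (a.factorial : ℝ) *
        (2^(ξ+lam+2*a+1) * (((ξ+a).factorial : ℝ) * ((lam+a).factorial : ℝ))
          / ((ξ+lam+2*a+1).factorial : ℝ))) := by
  set P := jacPoly ξ lam a with hP
  set lc : ℝ := P.coeff a with hlc
  set r : Polynomial ℝ := P - C lc * X ^ a with hr
  clear_value P lc r
  have hlc_ne : lc ≠ 0 := by
    rw [hlc, hP, jacPoly_coeff_top]
    have h1 : (a.factorial : ℝ) ≠ 0 := by positivity
    have h2 : ((ξ + lam + 2*a).descFactorial a : ℝ) ≠ 0 := by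
      have : (ξ + lam + 2 * a).descFactorial a ≠ 0 := by
        rw [Ne, Nat.descFactorial_eq_zero_iff_lt]; omega
      exact_mod_cast this
    have h3 : ((-1:ℝ)^a) ≠ 0 := by positivity
    have h4 : ((2:ℝ)^a) ≠ 0 := by positivity
    field_simp
    exact div_ne_zero (mul_ne_zero (pow_ne_zero _ h3) h2) (mul_ne_zero h4 h1)
  have hdr : derivative^[a] r = 0 := by
    by_cases h0 : r = 0
    · rw [h0]; simp
    · apply iterate_derivative_eq_zero
      have hdeg : r.degree < (a : WithBot ℕ) := by
        have h1 : P.degree = (C lc * X ^ a).degree := by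
          rw [degree_C_mul_X_pow a hlc_ne, hP, degree_eq_natDegree (jacPoly_ne_zero ξ lam a),
            jacPoly_natDegree]
        have h2 : P.leadingCoeff = (C lc * X ^ a).leadingCoeff := by
          rw [leadingCoeff_mul_monic (monic_X_pow a), leadingCoeff_C, hlc, hP, leadingCoeff,
            jacPoly_natDegree]
        have h3 := degree_sub_lt h1 (hP ▸ jacPoly_ne_zero ξ lam a) h2
        rw [h1, degree_C_mul_X_pow a hlc_ne] at h3
        exact hr ▸ h3
      exact (natDegree_lt_iff_degree_lt h0).2 hdeg
  have hsplit : (fun x : ℝ => (derivative^[a] (jacR ξ lam a)).eval x * P.eval x) =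
      fun x : ℝ => lc * ((derivative^[a] (jacR ξ lam a)).eval x * x ^ a) +
        (derivative^[a] (jacR ξ lam a)).eval x * r.eval x := by
    funext x
    rw [hr]
    simp only [eval_sub, eval_mul, eval_C, eval_pow, eval_X]
    ring
  rw [hsplit, intervalIntegral.integral_add
      ((by fun_prop : Continuous fun x : ℝ =>
        lc * ((derivative^[a] (jacR ξ lam a)).eval x * x ^ a)).intervalIntegrable _ _)
      ((by exact (Polynomial.continuous _).mul (Polynomial.continuous _) : Continuous fun x : ℝ =>
        (derivative^[a] (jacR ξ lam a)).eval x * r.eval x).intervalIntegrable _ _),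
    intervalIntegral.integral_const_mul, jac_int_X_pow, jac_int_lowdeg ξ lam a r hdr, add_zero]

lemma jacobi_val (ξ lam a : ℕ) :
    (∫ x in (-1:ℝ)..1, (1-x)^ξ * (1+x)^lam *
        ((jacPoly ξ lam a).eval x * (jacPoly ξ lam a).eval x)) =
      2^(ξ+lam+1) * (((ξ+a).factorial:ℝ) * ((lam+a).factorial:ℝ)) /
        ((2*(a:ℝ)+ξ+lam+1) * ((a.factorial:ℝ) * ((a+ξ+lam).factorial:ℝ))) := by
  have hpt : ∀ x : ℝ, (1-x)^ξ * (1+x)^lam * ((jacPoly ξ lam a).eval x *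
      (jacPoly ξ lam a).eval x) = ((-1:ℝ)^a / (2^a * a.factorial)) *
        ((derivative^[a] (jacR ξ lam a)).eval x * (jacPoly ξ lam a).eval x) := by
    intro x
    have := congrArg (eval x) (jacPoly_weight ξ lam a)
    simp only [eval_mul, eval_pow, eval_sub, eval_add, eval_one, eval_X, eval_C] at this
    calc (1-x)^ξ * (1+x)^lam * ((jacPoly ξ lam a).eval x * (jacPoly ξ lam a).eval x)
        = ((1-x)^ξ * (1+x)^lam * (jacPoly ξ lam a).eval x) * (jacPoly ξ lam a).eval x := by ring
      _ = ((-1:ℝ)^a / (2^a * a.factorial) * (derivative^[a] (jacR ξ lam a)).eval x) *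
          (jacPoly ξ lam a).eval x := by rw [this]
      _ = _ := by ring
  simp only [hpt]
  rw [intervalIntegral.integral_const_mul, jac_int_jacPoly_self, jacPoly_coeff_top]
  -- arithmetic
  have hdF : ((ξ+lam+2*a).descFactorial a : ℝ) * ((ξ+lam+a).factorial : ℝ)
      = ((ξ+lam+2*a).factorial : ℝ) := by
    rw [mul_comm]
    have := Nat.factorial_mul_descFactorial (n := ξ+lam+2*a) (k := a) (by omega)
    rw [show ξ+lam+2*a - a = ξ+lam+a from by omega] at this
    exact_mod_cast this
  have hsucc : ((ξ+lam+2*a+1).factorial : ℝ) = ((ξ+lam+2*a:ℕ):ℝ)*((ξ+lam+2*a).factorial:ℝ)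
      + ((ξ+lam+2*a).factorial:ℝ) := by
    rw [Nat.factorial_succ]; push_cast; ring
  have hfa : ((a+ξ+lam).factorial : ℝ) = ((ξ+lam+a).factorial : ℝ) := by
    rw [show a+ξ+lam = ξ+lam+a from by omega]
  rw [hfa]
  have h1 : (a.factorial : ℝ) ≠ 0 := by positivity
  have h2 : ((ξ+lam+a).factorial : ℝ) ≠ 0 := by positivity
  have h3 : ((ξ+lam+2*a+1).factorial : ℝ) ≠ 0 := by positivity
  have h4 : (2*(a:ℝ)+ξ+lam+1) ≠ 0 := by positivity
  have h5 : ((2:ℝ)^a) ≠ 0 := by positivity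
  have hsq : ((-1:ℝ)^a) * ((-1:ℝ)^a) = 1 := by
    rw [← pow_add, ← two_mul, pow_mul, neg_one_sq, one_pow]
  have hdFne : ((ξ+lam+2*a).descFactorial a : ℝ) ≠ 0 := by
    have : (ξ + lam + 2 * a).descFactorial a ≠ 0 := by
      rw [Ne, Nat.descFactorial_eq_zero_iff_lt]; omega
    exact_mod_cast this
  have hexp : (2:ℝ)^(ξ+lam+2*a+1) = 2^(ξ+lam+1) * 2^a * 2^a := by
    rw [← pow_add, ← pow_add]; ring_nf
  push_cast at hsucc
  have hN : ((ξ+lam+2*a+1).factorial : ℝ) = (2*(a:ℝ)+ξ+lam+1) *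
      (((ξ+lam+2*a).descFactorial a : ℝ) * ((ξ+lam+a).factorial : ℝ)) := by
    rw [hdF, Nat.factorial_succ]; push_cast; ring
  rw [hN, hexp]
  rcases neg_one_pow_eq_or ℝ a with hs | hs <;> rw [hs] <;> field_simp <;> ring

lemma jacobi_pt (ξ lam a b : ℕ) (x : ℝ) :
    (1-x)^ξ * (1+x)^lam * ((jacPoly ξ lam a).eval x * (jacPoly ξ lam b).eval x) =
      ((-1:ℝ)^a / (2^a * a.factorial)) *
        ((derivative^[a] (jacR ξ lam a)).eval x * (jacPoly ξ lam b).eval x) := by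
  have := congrArg (eval x) (jacPoly_weight ξ lam a)
  simp only [eval_mul, eval_pow, eval_sub, eval_add, eval_one, eval_X, eval_C] at this
  calc (1-x)^ξ * (1+x)^lam * ((jacPoly ξ lam a).eval x * (jacPoly ξ lam b).eval x)
      = ((1-x)^ξ * (1+x)^lam * (jacPoly ξ lam a).eval x) * (jacPoly ξ lam b).eval x := by ring
    _ = ((-1:ℝ)^a / (2^a * a.factorial) * (derivative^[a] (jacR ξ lam a)).eval x) *
        (jacPoly ξ lam b).eval x := by rw [this]
    _ = _ := by ring

lemma jacobi_zero (ξ lam a a' : ℕ) (h : a ≠ a') :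
    (∫ x in (-1:ℝ)..1, (1-x)^ξ * (1+x)^lam *
        ((jacPoly ξ lam a).eval x * (jacPoly ξ lam a').eval x)) = 0 := by
  rcases Nat.lt_or_ge a' a with hlt | hge
  · simp only [jacobi_pt ξ lam a a']
    rw [intervalIntegral.integral_const_mul, jac_int_jacPoly_lt ξ lam a a' hlt, mul_zero]
  · have hlt : a < a' := by omega
    have hcomm : (fun x : ℝ => (1-x)^ξ * (1+x)^lam *
        ((jacPoly ξ lam a).eval x * (jacPoly ξ lam a').eval x)) =
        fun x : ℝ => (1-x)^ξ * (1+x)^lam *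
        ((jacPoly ξ lam a').eval x * (jacPoly ξ lam a).eval x) := by
      funext x; ring
    rw [hcomm]
    simp only [jacobi_pt ξ lam a' a]
    rw [intervalIntegral.integral_const_mul, jac_int_jacPoly_lt ξ lam a' a hlt, mul_zero]

lemma jacobi_integral (ξ lam a a' : ℕ) :
    (∫ x in (-1:ℝ)..1, (1-x)^ξ * (1+x)^lam *
        ((jacPoly ξ lam a).eval x * (jacPoly ξ lam a').eval x)) =
      if a = a' then 2^(ξ+lam+1) * (((ξ+a).factorial:ℝ) * ((lam+a).factorial:ℝ)) /
        ((2*(a:ℝ)+ξ+lam+1) * ((a.factorial:ℝ) * ((a+ξ+lam).factorial:ℝ))) else 0 := by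
  split_ifs with h
  · subst h; exact jacobi_val ξ lam a
  · exact jacobi_zero ξ lam a a' h

lemma jacobiP_eq (a ξ lam : ℕ) (x : ℝ) (hx1 : x ≠ 1) (hx2 : x ≠ -1) :
    jacobiP a ξ lam x = (jacPoly ξ lam a).eval x := by
  have hf : (fun y : ℝ => (1 - y) ^ ξ * (1 + y) ^ lam * (1 - y ^ 2) ^ a) =
      fun y : ℝ => (jacR ξ lam a).eval y := by
    funext y
    simp only [jacR, eval_mul, eval_pow, eval_sub, eval_add, eval_one, eval_X]
    rw [show (1:ℝ) - y^2 = (1-y)*(1+y) from by ring, mul_pow]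
    ring
  have h1 : (1 : ℝ) - x ≠ 0 := sub_ne_zero.2 (Ne.symm hx1)
  have h2 : (1 : ℝ) + x ≠ 0 := by
    intro h; apply hx2; linarith
  rw [jacobiP, hf]
  simp only [iteratedDeriv_polyeval]
  have h3 := congrArg (eval x) (jacS_spec ξ lam a)
  simp only [eval_mul, eval_pow, eval_sub, eval_add, eval_one, eval_X] at h3
  rw [h3, jacPoly, eval_mul, eval_C]
  rw [zpow_neg, zpow_neg, zpow_natCast, zpow_natCast]
  field_simp

lemma sin_half_sq (θ : ℝ) : Real.sin (θ/2) ^ 2 = (1 - Real.cos θ) / 2 := by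
  have h1 := Real.cos_two_mul (θ/2)
  rw [show 2*(θ/2) = θ from by ring] at h1
  have h2 := Real.sin_sq_add_cos_sq (θ/2)
  linarith

lemma cos_half_sq (θ : ℝ) : Real.cos (θ/2) ^ 2 = (1 + Real.cos θ) / 2 := by
  have h1 := Real.cos_two_mul (θ/2)
  rw [show 2*(θ/2) = θ from by ring] at h1
  linarith

lemma omega_sq (k n : ℤ) :
    (if k ≤ n then (1:ℝ) else (-1 : ℝ) ^ (n - k)) *
    (if k ≤ n then (1:ℝ) else (-1 : ℝ) ^ (n - k)) = 1 := by
  split_ifs with h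
  · norm_num
  · rw [← zpow_add₀ (by norm_num : (-1:ℝ) ≠ 0), ← two_mul, zpow_mul]
    norm_num

lemma wignerd_mul_eq (l l' : ℕ) (k n : ℤ) (θ : ℝ) (hθ : θ ∈ Set.uIcc 0 Real.pi) :
    wignerd l k n θ * wignerd l' k n θ * Real.sin θ =
      (Real.sqrt (jacobiGamma (l - ((k-n).natAbs + (k+n).natAbs)/2) (k-n).natAbs (k+n).natAbs) *
       Real.sqrt (jacobiGamma (l' - ((k-n).natAbs + (k+n).natAbs)/2) (k-n).natAbs (k+n).natAbs) *
       ((1 - Real.cos θ)/2) ^ (k-n).natAbs * ((1 + Real.cos θ)/2) ^ (k+n).natAbs *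
       (jacPoly (k-n).natAbs (k+n).natAbs (l - ((k-n).natAbs + (k+n).natAbs)/2)).eval (Real.cos θ) *
       (jacPoly (k-n).natAbs (k+n).natAbs (l' - ((k-n).natAbs + (k+n).natAbs)/2)).eval (Real.cos θ))
       * Real.sin θ := by
  rw [Set.uIcc_of_le Real.pi_pos.le] at hθ
  set ξ := (k-n).natAbs
  set lam := (k+n).natAbs
  set a := l - (ξ + lam)/2
  set a' := l' - (ξ + lam)/2
  rcases eq_or_lt_of_le hθ.1 with h0 | h0
  · rw [← h0]; simp
  rcases eq_or_lt_of_le hθ.2 with hpi | hpi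
  · rw [hpi]; simp
  have hc1 : Real.cos θ ≠ 1 := by
    have := Real.cos_lt_cos_of_nonneg_of_le_pi (le_refl 0) hθ.2 h0
    simp only [Real.cos_zero] at this
    linarith
  have hc2 : Real.cos θ ≠ -1 := by
    have := Real.cos_lt_cos_of_nonneg_of_le_pi hθ.1 (le_refl Real.pi) hpi
    simp only [Real.cos_pi] at this
    linarith
  show (_ * Real.sqrt (jacobiGamma a ξ lam) * (Real.sin (θ / 2)) ^ ξ * (Real.cos (θ / 2)) ^ lam *
      jacobiP a ξ lam (Real.cos θ)) * (_ * Real.sqrt (jacobiGamma a' ξ lam) *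
      (Real.sin (θ / 2)) ^ ξ * (Real.cos (θ / 2)) ^ lam *
      jacobiP a' ξ lam (Real.cos θ)) * Real.sin θ = _
  rw [jacobiP_eq a ξ lam _ hc1 hc2, jacobiP_eq a' ξ lam _ hc1 hc2]
  rw [← sin_half_sq, ← cos_half_sq]
  have hω := omega_sq k n
  calc (if k ≤ n then (1:ℝ) else (-1 : ℝ) ^ (n - k)) * Real.sqrt (jacobiGamma a ξ lam) *
        (Real.sin (θ / 2)) ^ ξ * (Real.cos (θ / 2)) ^ lam * (jacPoly ξ lam a).eval (Real.cos θ) *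
        ((if k ≤ n then (1:ℝ) else (-1 : ℝ) ^ (n - k)) * Real.sqrt (jacobiGamma a' ξ lam) *
        (Real.sin (θ / 2)) ^ ξ * (Real.cos (θ / 2)) ^ lam *
        (jacPoly ξ lam a').eval (Real.cos θ)) * Real.sin θ
      = ((if k ≤ n then (1:ℝ) else (-1 : ℝ) ^ (n - k)) *
          (if k ≤ n then (1:ℝ) else (-1 : ℝ) ^ (n - k))) *
        (Real.sqrt (jacobiGamma a ξ lam) * Real.sqrt (jacobiGamma a' ξ lam) *
        (Real.sin (θ/2)^2) ^ ξ * (Real.cos (θ/2)^2) ^ lam *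
        (jacPoly ξ lam a).eval (Real.cos θ) * (jacPoly ξ lam a').eval (Real.cos θ) *
        Real.sin θ) := by
        rw [show (Real.sin (θ/2)^2)^ξ = Real.sin (θ/2)^ξ * Real.sin (θ/2)^ξ from by
            rw [sq, mul_pow],
          show (Real.cos (θ/2)^2)^lam = Real.cos (θ/2)^lam * Real.cos (θ/2)^lam from by
            rw [sq, mul_pow]]
        try ring
    _ = _ := by rw [hω, one_mul]; try ring

lemma wignerd_theta (l l' : ℕ) (k n : ℤ) (hk : k.natAbs ≤ l) (hn : n.natAbs ≤ l)
    (hk' : k.natAbs ≤ l') (hn' : n.natAbs ≤ l') :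
    (∫ θ in (0:ℝ)..Real.pi, wignerd l k n θ * wignerd l' k n θ * Real.sin θ) =
      if l = l' then 2/(2*(l:ℝ)+1) else 0 := by
  set ξ := (k-n).natAbs with hξ
  set lam := (k+n).natAbs with hlam
  set a := l - (ξ + lam)/2 with ha
  set a' := l' - (ξ + lam)/2 with ha'
  have hM : ξ + lam = 2 * max k.natAbs n.natAbs := by
    rw [hξ, hlam]; omega
  have hmaxl : max k.natAbs n.natAbs ≤ l := by omega
  have hmaxl' : max k.natAbs n.natAbs ≤ l' := by omega
  have h2a : 2*a + ξ + lam = 2*l := by omega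
  have haa' : (a = a') ↔ (l = l') := by omega
  set G : ℝ → ℝ := fun x =>
    Real.sqrt (jacobiGamma a ξ lam) * Real.sqrt (jacobiGamma a' ξ lam) *
    ((1 - x)/2) ^ ξ * ((1 + x)/2) ^ lam *
    (jacPoly ξ lam a).eval x * (jacPoly ξ lam a').eval x with hG
  have hGcont : Continuous G := by
    rw [hG]
    fun_prop
  have step1 : (∫ θ in (0:ℝ)..Real.pi, wignerd l k n θ * wignerd l' k n θ * Real.sin θ) =
      ∫ θ in (0:ℝ)..Real.pi, G (Real.cos θ) * Real.sin θ := by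
    apply intervalIntegral.integral_congr
    intro θ hθ
    exact wignerd_mul_eq l l' k n θ hθ
  have step2 : (∫ θ in (0:ℝ)..Real.pi, G (Real.cos θ) * Real.sin θ) =
      ∫ x in (-1:ℝ)..1, G x := by
    have h := intervalIntegral.integral_comp_smul_deriv (f := Real.cos)
      (f' := fun θ => -Real.sin θ) (g := G) (a := (0:ℝ)) (b := Real.pi)
      (fun θ _ => Real.hasDerivAt_cos θ) (Real.continuous_sin.neg.continuousOn) hGcont
    simp only [Real.cos_zero, Real.cos_pi, smul_eq_mul, Function.comp_apply] at h
    have h2 : (∫ θ in (0:ℝ)..Real.pi, -Real.sin θ * G (Real.cos θ)) =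
        - ∫ θ in (0:ℝ)..Real.pi, G (Real.cos θ) * Real.sin θ := by
      rw [← intervalIntegral.integral_neg]
      congr 1
      funext θ
      ring
    have h3 : (∫ x in (1:ℝ)..(-1:ℝ), G x) = - ∫ x in (-1:ℝ)..1, G x :=
      intervalIntegral.integral_symm (-1) 1
    rw [h2, h3] at h
    linarith
  have step3 : (∫ x in (-1:ℝ)..1, G x) =
      (Real.sqrt (jacobiGamma a ξ lam) * Real.sqrt (jacobiGamma a' ξ lam) /
        (2^ξ * 2^lam)) * ∫ x in (-1:ℝ)..1,
          (1-x)^ξ * (1+x)^lam * ((jacPoly ξ lam a).eval x * (jacPoly ξ lam a').eval x) := by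
    rw [← intervalIntegral.integral_const_mul]
    congr 1
    funext x
    rw [hG]
    simp only [div_pow]
    ring
  rw [step1, step2, step3, jacobi_integral]
  split_ifs with h1 h2 h2
  · -- a = a', l = l'
    rw [← h1]
    have hγ : Real.sqrt (jacobiGamma a ξ lam) * Real.sqrt (jacobiGamma a ξ lam) =
        jacobiGamma a ξ lam := by
      apply Real.mul_self_sqrt
      rw [jacobiGamma]
      positivity
    rw [hγ, jacobiGamma]
    have hcast : 2*(a:ℝ)+ξ+lam+1 = 2*(l:ℝ)+1 := by
      have : ((2*a + ξ + lam : ℕ) : ℝ) = ((2*l : ℕ) : ℝ) := by rw [h2a]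
      push_cast at this
      linarith
    rw [hcast]
    rw [show ξ+a = a+ξ from by ring, show lam+a = a+lam from by ring,
      show ξ+lam+1 = ξ+(lam+1) from rfl, pow_add, pow_add]
    have f1 : ((a.factorial : ℝ)) ≠ 0 := by positivity
    have f2 : (((a+ξ+lam).factorial : ℝ)) ≠ 0 := by positivity
    have f3 : (((a+ξ).factorial : ℝ)) ≠ 0 := by positivity
    have f4 : (((a+lam).factorial : ℝ)) ≠ 0 := by positivity
    have f5 : (2*(l:ℝ)+1) ≠ 0 := by positivity
    field_simp
  · exact absurd (haa'.1 h1) h2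
  · exact absurd (haa'.2 h2) h1
  · rw [mul_zero]

lemma intervalIntegral_ofReal' {a b : ℝ} {f : ℝ → ℝ} :
    (∫ x in a..b, ((f x : ℝ) : ℂ)) = ((∫ x in a..b, f x : ℝ) : ℂ) :=
  RCLike.intervalIntegral_ofReal

lemma intExp (m : ℤ) : (∫ x in (0:ℝ)..(2*Real.pi), Complex.exp (Complex.I * (m:ℂ) * (x:ℂ))) =
    if m = 0 then (2*Real.pi : ℂ) else 0 := by
  split_ifs with h
  · subst h
    simp only [Int.cast_zero, mul_zero, zero_mul, Complex.exp_zero]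
    rw [intervalIntegral.integral_const]
    norm_num
  · have hc : Complex.I * (m:ℂ) ≠ 0 := by
      apply mul_ne_zero Complex.I_ne_zero
      exact_mod_cast h
    have := integral_exp_mul_complex hc (a := 0) (b := 2*Real.pi)
    have heq : (fun x : ℝ => Complex.exp (Complex.I * (m:ℂ) * (x:ℂ))) =
        fun x : ℝ => Complex.exp ((Complex.I * (m:ℂ)) * (x:ℂ)) := by
      funext x; ring_nf
    rw [heq, this]
    rw [show (Complex.I * (m:ℂ) * ((2*Real.pi : ℝ):ℂ)) = (m:ℂ) * (2*(Real.pi:ℂ)*Complex.I)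
      from by push_cast; ring]
    rw [Complex.exp_int_mul_two_pi_mul_I]
    simp

lemma wignerD_pointwise (l l' : ℕ) (k n k' n' : ℤ) (θ φ χ : ℝ) :
    wignerD l k n θ φ χ * (starRingEnd ℂ) (wignerD l' k' n' θ φ χ) * ((Real.sin θ : ℝ) : ℂ) =
      Complex.exp (Complex.I * ((k' - k : ℤ):ℂ) * (φ:ℂ)) *
        (Complex.exp (Complex.I * ((n' - n : ℤ):ℂ) * (χ:ℂ)) *
          ((Real.sqrt ((2 * (l : ℝ) + 1) / (8 * Real.pi ^ 2)) *
            Real.sqrt ((2 * (l' : ℝ) + 1) / (8 * Real.pi ^ 2)) *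
            (wignerd l k n θ * wignerd l' k' n' θ * Real.sin θ) : ℝ) : ℂ)) := by
  simp only [wignerD, map_mul, ← Complex.exp_conj, map_neg, map_mul, Complex.conj_I,
    Complex.conj_ofReal, map_intCast]
  rw [show Complex.I * ((k' - k : ℤ):ℂ) * (φ:ℂ) =
      (-(Complex.I * (k:ℂ) * (φ:ℂ))) + (Complex.I * (k':ℂ) * (φ:ℂ)) from by push_cast; ring,
    show Complex.I * ((n' - n : ℤ):ℂ) * (χ:ℂ) =
      (-(Complex.I * (n:ℂ) * (χ:ℂ))) + (Complex.I * (n':ℂ) * (χ:ℂ)) from by push_cast; ring,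
    Complex.exp_add, Complex.exp_add]
  push_cast
  ring

/-- orthonormality of Wigner D-functions with respect to `sin θ dθ dφ dχ` on
`[0,π]×[0,2π]×[0,2π]`. -/
theorem wignerD_orthonormal (l l' : ℕ) (k n k' n' : ℤ)
    (hk₁ : -(l : ℤ) ≤ k) (hk₂ : k ≤ (l : ℤ)) (hn₁ : -(l : ℤ) ≤ n) (hn₂ : n ≤ (l : ℤ))
    (hk₁' : -(l' : ℤ) ≤ k') (hk₂' : k' ≤ (l' : ℤ)) (hn₁' : -(l' : ℤ) ≤ n') (hn₂' : n' ≤ (l' : ℤ)) :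
    (∫ χ in (0 : ℝ)..(2 * Real.pi), ∫ φ in (0 : ℝ)..(2 * Real.pi), ∫ θ in (0 : ℝ)..Real.pi,
        wignerD l k n θ φ χ * (starRingEnd ℂ) (wignerD l' k' n' θ φ χ) * ((Real.sin θ : ℝ) : ℂ)) =
      if l = l' ∧ k = k' ∧ n = n' then 1 else 0 := by
  set N : ℝ := Real.sqrt ((2 * (l : ℝ) + 1) / (8 * Real.pi ^ 2)) with hN
  set N' : ℝ := Real.sqrt ((2 * (l' : ℝ) + 1) / (8 * Real.pi ^ 2)) with hN'
  set Iθ : ℝ := ∫ θ in (0:ℝ)..Real.pi, wignerd l k n θ * wignerd l' k' n' θ * Real.sin θ with hIθ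
  have key : (∫ χ in (0 : ℝ)..(2 * Real.pi), ∫ φ in (0 : ℝ)..(2 * Real.pi),
      ∫ θ in (0 : ℝ)..Real.pi, wignerD l k n θ φ χ * (starRingEnd ℂ) (wignerD l' k' n' θ φ χ) *
        ((Real.sin θ : ℝ) : ℂ)) =
      (∫ φ in (0:ℝ)..(2*Real.pi), Complex.exp (Complex.I * ((k' - k : ℤ):ℂ) * (φ:ℂ))) *
      ((∫ χ in (0:ℝ)..(2*Real.pi), Complex.exp (Complex.I * ((n' - n : ℤ):ℂ) * (χ:ℂ))) *
        ((N * N' * Iθ : ℝ) : ℂ)) := by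
    have h1 : ∀ φ χ : ℝ, (∫ θ in (0 : ℝ)..Real.pi,
        wignerD l k n θ φ χ * (starRingEnd ℂ) (wignerD l' k' n' θ φ χ) * ((Real.sin θ : ℝ) : ℂ))
        = Complex.exp (Complex.I * ((k' - k : ℤ):ℂ) * (φ:ℂ)) *
          (Complex.exp (Complex.I * ((n' - n : ℤ):ℂ) * (χ:ℂ)) * ((N * N' * Iθ : ℝ) : ℂ)) := by
      intro φ χ
      simp only [wignerD_pointwise]
      rw [intervalIntegral.integral_const_mul, intervalIntegral.integral_const_mul]
      have h2 : (∫ θ in (0:ℝ)..Real.pi,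
          ((N * N' * (wignerd l k n θ * wignerd l' k' n' θ * Real.sin θ) : ℝ) : ℂ))
          = ((N * N' * Iθ : ℝ) : ℂ) := by
        rw [intervalIntegral_ofReal']
        norm_cast
        rw [hIθ, intervalIntegral.integral_const_mul]
      rw [h2]
    simp only [h1]
    simp only [intervalIntegral.integral_mul_const]
    rw [intervalIntegral.integral_const_mul, intervalIntegral.integral_mul_const]
  rw [key, intExp, intExp]
  by_cases hkk : k = k'
  · by_cases hnn : n = n'
    · rw [if_pos (by omega), if_pos (by omega)]
      subst hkk; subst hnn
      have hIθval : Iθ = if l = l' then 2/(2*(l:ℝ)+1) else 0 := by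
        rw [hIθ]
        exact wignerd_theta l l' k n (by omega) (by omega) (by omega) (by omega)
      by_cases hll : l = l'
      · subst hll
        rw [if_pos ⟨rfl, rfl, rfl⟩]
        have hπ : (Real.pi : ℝ) ≠ 0 := Real.pi_ne_zero
        have h2l : (2*(l:ℝ)+1) ≠ 0 := by positivity
        have hreal : N * N' * Iθ = 1/(4*Real.pi^2) := by
          rw [hIθval, if_pos rfl, hN, hN', Real.mul_self_sqrt (by positivity)]
          field_simp
          ring
        rw [hreal]
        have hπc : ((Real.pi : ℝ) : ℂ) ≠ 0 := Complex.ofReal_ne_zero.mpr Real.pi_ne_zero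
        push_cast
        field_simp
        ring
      · rw [if_neg (fun h => hll h.1), hIθval, if_neg hll]
        norm_num
    · rw [if_neg (show ¬(n' - n = 0) by omega),
        if_neg (show ¬(l = l' ∧ k = k' ∧ n = n') from fun h => hnn h.2.2)]
      norm_num
  · rw [if_neg (show ¬(k' - k = 0) by omega),
      if_neg (show ¬(l = l' ∧ k = k' ∧ n = n') from fun h => hkk h.2.1)]
    norm_num

end WignerAux
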